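/- Let h be an orientation-preserving homeomorphism of the plane whose unique fixed point is 0, and suppose every closed curve of degree 1 in ℝ² ∖ {0} has h-length at least some d ≥ 2 (i.e. the module of h is d ≥ 2). If γ is any curve in ℝ² ∖ {0} that can be written as a concatenation of at most three arcs each disjoint from its image under h, and γ is a closed curve of nonzero degree around 0, then d ≤ 3. Contrapositive: if the module of h is at least 4, then no closed curve of nonzero degree around 0 can be decomposed into three or fewer h-free arcs. -/

import Mathlib

open Set

/-- A curve `γ` (defined on `[0,1]`) with values in `ℂ ∖ {0}` has degree `n` around `0`
if it lifts through the covering `exp : ℂ → ℂ ∖ {0}` to a path whose endpoints differ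
by `2πin`. -/
def HasDeg (γ : ℝ → ℂ) (n : ℤ) : Prop :=
  ∃ g : ℝ → ℂ, ContinuousOn g (Icc 0 1) ∧
    (∀ t ∈ Icc (0:ℝ) 1, γ t = Complex.exp (g t)) ∧
    g 1 - g 0 = ((2 * Real.pi * (n : ℝ) : ℝ) : ℂ) * Complex.I

/-- A loop in `ℝ² ∖ {0}`: a continuous closed curve on `[0,1]` avoiding the origin. -/
def IsLoopIn (γ : ℝ → ℂ) : Prop :=
  ContinuousOn γ (Icc 0 1) ∧ γ 0 = γ 1 ∧ ∀ t ∈ Icc (0:ℝ) 1, γ t ≠ 0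

/-- A decomposition of the closed curve `γ` into `l` subarcs, each of which is free for
`h` (disjoint from its image under `h`). The `h`-length of `γ` is the least such `l`. -/
def Decomp (h : ℂ → ℂ) (γ : ℝ → ℂ) (l : ℕ) : Prop :=
  ∃ t : ℕ → ℝ, t 0 = 0 ∧ t l = 1 ∧ (∀ i < l, t i ≤ t (i + 1)) ∧
    ∀ i < l, ∀ s ∈ Icc (t i) (t (i + 1)), ∀ s' ∈ Icc (t i) (t (i + 1)),
      h (γ s) ≠ γ s'

/-- Orientation preservation, encoded (via Kneser's theorem) as being isotopic to the
identity through bijections of the plane. -/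
def IsotopicToId (h : ℂ → ℂ) : Prop :=
  ∃ F : ℝ → ℂ → ℂ, Continuous (Function.uncurry F) ∧ F 0 = id ∧ F 1 = h ∧
    ∀ t : ℝ, Function.Bijective (F t)

noncomputable section

/-- Compatibility: the complex absolute value as an `AbsoluteValue`, given by the norm. -/
def Complex.abs : AbsoluteValue ℂ ℝ where
  toFun := fun z => ‖z‖
  map_mul' := norm_mul
  nonneg' := norm_nonneg
  eq_zero' := fun _ => norm_eq_zero
  add_le' := norm_add_le

lemma Complex.norm_eq_abs (z : ℂ) : ‖z‖ = Complex.abs z := rfl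

lemma Complex.abs_apply (z : ℂ) : Complex.abs z = ‖z‖ := rfl

@[simp] lemma Complex.abs_ofReal (r : ℝ) : Complex.abs (r : ℂ) = |r| := by
  rw [Complex.abs_apply, Complex.norm_real, Real.norm_eq_abs]

@[simp] lemma Complex.abs_exp (z : ℂ) : Complex.abs (Complex.exp z) = Real.exp z.re :=
  Complex.norm_exp z

@[simp] lemma Complex.abs_two : Complex.abs 2 = 2 := by
  rw [Complex.abs_apply]; norm_num

@[simp] lemma Complex.abs_I : Complex.abs Complex.I = 1 := by
  rw [Complex.abs_apply]; simp

@[simp] lemma Complex.abs_intCast (v : ℤ) : Complex.abs (v : ℂ) = |(v : ℝ)| := by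
  rw [Complex.abs_apply, Complex.norm_intCast]

lemma Complex.continuous_abs : Continuous Complex.abs := continuous_norm


namespace Stmt5Aux

open Complex

lemma continuousOn_union_closed {F : ℝ → ℂ} {s t : Set ℝ} (hs : IsClosed s) (ht : IsClosed t)
    (hfs : ContinuousOn F s) (hft : ContinuousOn F t) : ContinuousOn F (s ∪ t) := by
  intro x hx
  rcases hx with hx | hx
  · refine ContinuousWithinAt.union (hfs x hx) ?_
    by_cases hxt : x ∈ t
    · exact hft x hxt
    · exact continuousWithinAt_of_notMem_closure (by rwa [ht.closure_eq])
  · refine ContinuousWithinAt.union ?_ (hft x hx)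
    by_cases hxs : x ∈ s
    · exact hfs x hxs
    · exact continuousWithinAt_of_notMem_closure (by rwa [hs.closure_eq])

lemma local_lift {f : ℝ → ℂ} {x z : ℝ} {p : ℂ} (hxz : x ≤ z)
    (hf : ContinuousOn f (Icc x z)) (hp : p ≠ 0)
    (hb : ∀ y ∈ Icc x z, Complex.abs (f y - p) < Complex.abs p)
    (w₀ : ℂ) (hw : Complex.exp w₀ = f x) :
    ∃ θ : ℝ → ℂ, ContinuousOn θ (Icc x z) ∧ (∀ y ∈ Icc x z, f y = Complex.exp (θ y)) ∧
      θ x = w₀ := by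
  have hne : ∀ y ∈ Icc x z, f y ≠ 0 := by
    intro y hy h0
    have := hb y hy
    rw [h0, zero_sub, map_neg_eq_map] at this
    exact lt_irrefl _ this
  have hslit : ∀ y ∈ Icc x z, f y / p ∈ slitPlane := by
    intro y hy
    have h1 : ‖f y / p - 1‖ < 1 := by
      rw [div_sub_one hp, norm_div]
      rw [div_lt_one (by simpa [norm_pos_iff] using hp)]
      simpa [Complex.norm_eq_abs] using hb y hy
    have h2 := Complex.mem_slitPlane_of_norm_lt_one h1
    simpa using h2
  have hxmem : x ∈ Icc x z := ⟨le_rfl, hxz⟩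
  refine ⟨fun y => w₀ - Complex.log (f x / p) + Complex.log (f y / p), ?_, ?_, by ring⟩
  · apply ContinuousOn.add continuousOn_const
    exact ContinuousOn.clog (hf.div_const p) hslit
  · intro y hy
    have hfy : f y / p ≠ 0 := div_ne_zero (hne y hy) hp
    have hfx : f x / p ≠ 0 := div_ne_zero (hne x hxmem) hp
    rw [Complex.exp_add, Complex.exp_sub, Complex.exp_log hfy, Complex.exp_log hfx, hw]
    field_simp
    rw [mul_div_assoc, div_self (hne x hxmem), mul_one]

lemma exists_lift {f : ℝ → ℂ} {a b : ℝ} (hab : a ≤ b) (hf : ContinuousOn f (Icc a b))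
    (h0 : ∀ x ∈ Icc a b, f x ≠ 0) :
    ∃ θ : ℝ → ℂ, ContinuousOn θ (Icc a b) ∧ ∀ x ∈ Icc a b, f x = Complex.exp (θ x) := by
  set S : Set ℝ := {x | x ∈ Icc a b ∧ ∃ θ : ℝ → ℂ, ContinuousOn θ (Icc a x) ∧
    ∀ y ∈ Icc a x, f y = Complex.exp (θ y)} with hS
  have haS : a ∈ S := by
    refine ⟨⟨le_rfl, hab⟩, fun _ => Complex.log (f a), ?_, ?_⟩
    · rw [Icc_self]; exact continuousOn_singleton _ _
    · intro y hy
      rw [Icc_self, mem_singleton_iff] at hy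
      rw [hy]
      exact (Complex.exp_log (h0 a ⟨le_rfl, hab⟩)).symm
  have hbdd : BddAbove S := ⟨b, fun x hx => hx.1.2⟩
  set c := sSup S with hc
  have hcIcc : c ∈ Icc a b := ⟨le_csSup hbdd haS, csSup_le ⟨a, haS⟩ fun x hx => hx.1.2⟩
  have hfc : f c ≠ 0 := h0 c hcIcc
  obtain ⟨δ, hδpos, hδ⟩ : ∃ δ > 0, ∀ y ∈ Icc a b, |y - c| < δ →
      Complex.abs (f y - f c) < Complex.abs (f c) := by
    have h2 : (0:ℝ) < Complex.abs (f c) := Complex.abs.pos hfc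
    obtain ⟨δ, hδpos, h⟩ := Metric.continuousWithinAt_iff.mp (hf c hcIcc) _ h2
    refine ⟨δ, hδpos, fun y hy hyd => ?_⟩
    have := h hy (by simpa [Real.dist_eq] using hyd)
    simpa [Complex.dist_eq, Complex.abs_apply] using this
  obtain ⟨x, hxS, hxgt⟩ : ∃ x ∈ S, c - δ/2 < x :=
    exists_lt_of_lt_csSup ⟨a, haS⟩ (by linarith)
  obtain ⟨hxIcc, θ₁, hθ₁c, hθ₁l⟩ := hxS
  have hxc : x ≤ c := le_csSup hbdd ⟨hxIcc, θ₁, hθ₁c, hθ₁l⟩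
  set z := min b (c + δ/2) with hz
  have hxz : x ≤ z := le_min hxIcc.2 (by linarith)
  have hzb : z ≤ b := min_le_left _ _
  have haz : a ≤ z := le_trans hxIcc.1 hxz
  have hsub : Icc x z ⊆ Icc a b := Icc_subset_Icc hxIcc.1 hzb
  have hball : ∀ y ∈ Icc x z, Complex.abs (f y - f c) < Complex.abs (f c) := by
    intro y hy
    apply hδ y (hsub hy)
    have h1 : c - δ/2 < y := lt_of_lt_of_le hxgt hy.1
    have h2 : y ≤ c + δ/2 := le_trans hy.2 (min_le_right _ _)
    rw [abs_sub_lt_iff]; constructor <;> linarith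
  obtain ⟨θ₂, hθ₂c, hθ₂l, hθ₂x⟩ := local_lift hxz (hf.mono hsub) hfc hball (θ₁ x)
    ((hθ₁l x ⟨hxIcc.1, le_rfl⟩).symm)
  set θ : ℝ → ℂ := fun y => if y ≤ x then θ₁ y else θ₂ y with hθ
  have hθcont : ContinuousOn θ (Icc a z) := by
    rw [← Icc_union_Icc_eq_Icc hxIcc.1 hxz]
    apply continuousOn_union_closed isClosed_Icc isClosed_Icc
    · apply hθ₁c.congr
      intro y hy
      simp [hθ, if_pos hy.2]
    · apply hθ₂c.congr
      intro y hy
      by_cases h : y ≤ x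
      · have : y = x := le_antisymm h hy.1
        subst this
        simp [hθ, hθ₂x]
      · simp [hθ, if_neg h]
  have hθlift : ∀ y ∈ Icc a z, f y = Complex.exp (θ y) := by
    intro y hy
    by_cases h : y ≤ x
    · rw [hθ]; simp only [if_pos h]; exact hθ₁l y ⟨hy.1, h⟩
    · rw [hθ]; simp only [if_neg h]; exact hθ₂l y ⟨le_of_not_ge h, hy.2⟩
  have hzS : z ∈ S := ⟨⟨haz, hzb⟩, θ, hθcont, hθlift⟩
  have hzc : z ≤ c := le_csSup hbdd hzS
  have hcb : c = b := by
    by_contra hne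
    have hclt : c < b := lt_of_le_of_ne hcIcc.2 hne
    have : c < z := lt_min hclt (by linarith)
    linarith
  have hzeq : z = b := by
    rw [hz, hcb]
    exact min_eq_left (by linarith)
  rw [hzeq] at hθcont hθlift
  exact ⟨θ, hθcont, hθlift⟩


noncomputable def tp : ℂ := 2 * (Real.pi : ℂ) * Complex.I

lemma tp_def : tp = 2 * (Real.pi : ℂ) * Complex.I := rfl

lemma abs_tp : Complex.abs tp = 2 * Real.pi := by
  rw [tp_def]
  simp [Complex.abs_ofReal]
  exact Real.pi_pos.le

lemma tp_ne : tp ≠ 0 := by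
  intro h
  have := abs_tp
  rw [h] at this
  simp at this

lemma exp_int_tp (j : ℤ) : Complex.exp (j * tp) = 1 :=
  Complex.exp_eq_one_iff.mpr ⟨j, by rw [tp_def]⟩



/-- Winding number of the loop `ℓ` (on `[s,t]`) around the point `w`. -/
def Wind (ℓ : ℝ → ℂ) (s t : ℝ) (w : ℂ) (ν : ℤ) : Prop :=
  ∃ θ : ℝ → ℂ, ContinuousOn θ (Icc s t) ∧ (∀ x ∈ Icc s t, ℓ x - w = Complex.exp (θ x)) ∧
    θ t - θ s = ν * tp

lemma wind_exists {ℓ : ℝ → ℂ} {s t : ℝ} (hst : s ≤ t) (hℓ : ContinuousOn ℓ (Icc s t))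
    (hloop : ℓ t = ℓ s) (w : ℂ) (havoid : ∀ x ∈ Icc s t, ℓ x ≠ w) :
    ∃ ν : ℤ, Wind ℓ s t w ν := by
  obtain ⟨θ, hθc, hθl⟩ := exists_lift hst (hℓ.sub continuousOn_const)
    (fun x hx => sub_ne_zero.mpr (havoid x hx))
  simp only [Pi.sub_apply] at hθl
  have hs : s ∈ Icc s t := ⟨le_rfl, hst⟩
  have ht : t ∈ Icc s t := ⟨hst, le_rfl⟩
  have : Complex.exp (θ t) = Complex.exp (θ s) := by
    rw [← hθl t ht, ← hθl s hs, hloop]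
  obtain ⟨j, hj⟩ := Complex.exp_eq_exp_iff_exists_int.mp this
  exact ⟨j, θ, hθc, hθl, by rw [hj, tp_def]; ring⟩

lemma wind_unique {ℓ : ℝ → ℂ} {s t : ℝ} (hst : s ≤ t) {w : ℂ} {ν ν' : ℤ}
    (h1 : Wind ℓ s t w ν) (h2 : Wind ℓ s t w ν') : ν = ν' := by
  obtain ⟨θ, hθc, hθl, hθd⟩ := h1
  obtain ⟨θ', hθ'c, hθ'l, hθ'd⟩ := h2
  have hs : s ∈ Icc s t := ⟨le_rfl, hst⟩
  have ht : t ∈ Icc s t := ⟨hst, le_rfl⟩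
  have hint : ∀ x ∈ Icc s t, ∃ j : ℤ, θ x - θ' x = j * tp := by
    intro x hx
    have : Complex.exp (θ x) = Complex.exp (θ' x) := by rw [← hθl x hx, ← hθ'l x hx]
    obtain ⟨j, hj⟩ := Complex.exp_eq_exp_iff_exists_int.mp this
    exact ⟨j, by rw [hj, tp_def]; ring⟩
  set r : ℝ → ℝ := fun x => ((θ x - θ' x) / tp).re with hr
  have hrc : ContinuousOn r (Icc s t) :=
    Complex.continuous_re.comp_continuousOn ((hθc.sub hθ'c).div_const tp)
  have hrint : ∀ x ∈ Icc s t, ∃ j : ℤ, r x = j := by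
    intro x hx
    obtain ⟨j, hj⟩ := hint x hx
    refine ⟨j, ?_⟩
    rw [hr]
    simp only [hj, mul_div_assoc, div_self tp_ne, mul_one]
    simp
  obtain ⟨js, hjs⟩ := hrint s hs
  obtain ⟨jt, hjt⟩ := hrint t ht
  have hkey : jt = js := by
    by_contra hne
    have hhalf : ∀ v : ℝ, (∃ j : ℤ, v = js + 1/2 ∨ v = jt + 1/2) → v ∈ r '' (Icc s t) → False := by
      intro v ⟨j0, hv⟩ ⟨x, hx, hrx⟩
      obtain ⟨j, hj⟩ := hrint x hx
      rcases hv with hv | hv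
      · rw [hj, hv] at hrx
        have : (2*j : ℤ) = 2*js + 1 := by
          have : (2*(j:ℝ)) = 2*(js:ℝ) + 1 := by linarith
          exact_mod_cast this
        omega
      · rw [hj, hv] at hrx
        have : (2*j : ℤ) = 2*jt + 1 := by
          have : (2*(j:ℝ)) = 2*(jt:ℝ) + 1 := by linarith
          exact_mod_cast this
        omega
    rcases lt_or_gt_of_ne hne with hlt | hlt
    · -- jt < js : r t < r s, use intermediate_value_Icc' with value jt + 1/2
      have hmem : (jt:ℝ) + 1/2 ∈ Icc (r t) (r s) := by
        constructor
        · rw [hjt]; linarith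
        · rw [hjs]
          have : (jt:ℝ) + 1 ≤ js := by exact_mod_cast hlt
          linarith
      exact hhalf _ ⟨0, Or.inr rfl⟩ (intermediate_value_Icc' hst hrc hmem)
    · have hmem : (js:ℝ) + 1/2 ∈ Icc (r s) (r t) := by
        constructor
        · rw [hjs]; linarith
        · rw [hjt]
          have : (js:ℝ) + 1 ≤ jt := by exact_mod_cast hlt
          linarith
      exact hhalf _ ⟨0, Or.inl rfl⟩ (intermediate_value_Icc hst hrc hmem)
  -- now conclude
  obtain ⟨j1, hj1⟩ := hint s hs
  obtain ⟨j2, hj2⟩ := hint t ht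
  have hr1 : r s = j1 := by
    rw [hr]; simp only [hj1, mul_div_assoc, div_self tp_ne, mul_one]; simp
  have hr2 : r t = j2 := by
    rw [hr]; simp only [hj2, mul_div_assoc, div_self tp_ne, mul_one]; simp
  have hj12 : j1 = j2 := by
    have e1 : (j1:ℝ) = js := by rw [← hr1, hjs]
    have e2 : (j2:ℝ) = jt := by rw [← hr2, hjt]
    have : (j1:ℝ) = j2 := by rw [e1, e2, hkey]
    exact_mod_cast this
  have hdd : (ν - ν' : ℂ) * tp = (j2 - j1 : ℂ) * tp := by
    have : (θ t - θ' t) - (θ s - θ' s) = (ν - ν' : ℂ) * tp := by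
      push_cast
      rw [sub_mul]
      rw [← hθd, ← hθ'd]
      ring
    rw [← this, hj1, hj2]
    push_cast
    ring
  have : ((ν - ν' : ℤ) : ℂ) = ((j2 - j1 : ℤ) : ℂ) := by
    have := mul_right_cancel₀ tp_ne hdd
    push_cast at this ⊢
    exact this
  have : ν - ν' = j2 - j1 := by exact_mod_cast this
  omega


lemma wind_step {ℓ : ℝ → ℂ} {s t : ℝ} (hst : s ≤ t) (hℓ : ContinuousOn ℓ (Icc s t))
    (hloop : ℓ t = ℓ s) {w w' : ℂ} {ν : ℤ}
    (havoid : ∀ x ∈ Icc s t, ℓ x ≠ w)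
    (hclose : ∀ x ∈ Icc s t, Complex.abs (w' - w) < Complex.abs (ℓ x - w))
    (h : Wind ℓ s t w ν) : Wind ℓ s t w' ν := by
  obtain ⟨θ, hθc, hθl, hθd⟩ := h
  have hs : s ∈ Icc s t := ⟨le_rfl, hst⟩
  have ht : t ∈ Icc s t := ⟨hst, le_rfl⟩
  have hden : ∀ x ∈ Icc s t, ℓ x - w ≠ 0 := fun x hx => sub_ne_zero.mpr (havoid x hx)
  set q : ℝ → ℂ := fun x => (w' - w) / (ℓ x - w) with hq
  have hqlt : ∀ x ∈ Icc s t, ‖q x‖ < 1 := by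
    intro x hx
    rw [hq]
    simp only [norm_div, Complex.norm_eq_abs]
    rw [div_lt_one (Complex.abs.pos (hden x hx))]
    exact hclose x hx
  have hslit : ∀ x ∈ Icc s t, 1 - q x ∈ slitPlane := by
    intro x hx
    have := Complex.mem_slitPlane_of_norm_lt_one (z := -q x) (by simpa using hqlt x hx)
    simpa [sub_eq_add_neg] using this
  have hqcont : ContinuousOn q (Icc s t) :=
    continuousOn_const.div (hℓ.sub continuousOn_const) hden
  refine ⟨fun x => θ x + Complex.log (1 - q x), ?_, ?_, ?_⟩
  · exact hθc.add (ContinuousOn.clog (continuousOn_const.sub hqcont) hslit)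
  · intro x hx
    have hcc : (ℓ x - w) * q x = w' - w := by
      have h := hden x hx
      rw [hq]
      field_simp
    rw [Complex.exp_add, Complex.exp_log (slitPlane_ne_zero (hslit x hx)), ← hθl x hx]
    rw [mul_sub, mul_one, hcc]
    ring
  · have hqts : q t = q s := by rw [hq]; simp [hloop]
    show θ t + Complex.log (1 - q t) - (θ s + Complex.log (1 - q s)) = ↑ν * tp
    rw [hqts, ← hθd]
    ring

lemma wind_path {ℓ : ℝ → ℂ} {s t : ℝ} (hst : s ≤ t) (hℓ : ContinuousOn ℓ (Icc s t))
    (hloop : ℓ t = ℓ s) {c : ℝ → ℂ} (hc : ContinuousOn c (Icc 0 1))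
    (havoid : ∀ u ∈ Icc (0:ℝ) 1, ∀ x ∈ Icc s t, ℓ x ≠ c u) {ν : ℤ}
    (h0 : Wind ℓ s t (c 0) ν) : Wind ℓ s t (c 1) ν := by
  set S : Set ℝ := {u | u ∈ Icc (0:ℝ) 1 ∧ Wind ℓ s t (c u) ν} with hS
  have h0S : (0:ℝ) ∈ S := ⟨⟨le_rfl, zero_le_one⟩, h0⟩
  have hbdd : BddAbove S := ⟨1, fun u hu => hu.1.2⟩
  set u₀ := sSup S with hu₀def
  have huIcc : u₀ ∈ Icc (0:ℝ) 1 := ⟨le_csSup hbdd h0S, csSup_le ⟨0, h0S⟩ fun u hu => hu.1.2⟩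
  obtain ⟨xm, hxm, hxmmin⟩ := isCompact_Icc.exists_isMinOn (Set.nonempty_Icc.mpr hst)
    ((Complex.continuous_abs.comp_continuousOn (hℓ.sub continuousOn_const)) :
      ContinuousOn (fun x => Complex.abs (ℓ x - c u₀)) (Icc s t))
  set ε := Complex.abs (ℓ xm - c u₀) with hε
  have hεpos : 0 < ε := Complex.abs.pos (sub_ne_zero.mpr (havoid u₀ huIcc xm hxm))
  have hεle : ∀ x ∈ Icc s t, ε ≤ Complex.abs (ℓ x - c u₀) := fun x hx =>
    isMinOn_iff.mp hxmmin x hx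
  obtain ⟨δ, hδpos, hδ⟩ : ∃ δ > 0, ∀ u ∈ Icc (0:ℝ) 1, |u - u₀| < δ →
      Complex.abs (c u - c u₀) < ε/4 := by
    obtain ⟨δ, hδpos, h⟩ := Metric.continuousWithinAt_iff.mp (hc u₀ huIcc) _
      (by linarith : (0:ℝ) < ε/4)
    refine ⟨δ, hδpos, fun u hu hud => ?_⟩
    have := h hu (by simpa [Real.dist_eq] using hud)
    simpa [Complex.dist_eq, Complex.abs_apply] using this
  have habs3 : ∀ w w' : ℂ, Complex.abs (w - c u₀) < ε/4 → Complex.abs (w' - c u₀) < ε/4 →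
      ∀ x ∈ Icc s t, Complex.abs (w' - w) < Complex.abs (ℓ x - w) := by
    intro w w' hw hw' x hx
    have h1 : Complex.abs (ℓ x - c u₀) ≤ Complex.abs (ℓ x - w) + Complex.abs (w - c u₀) :=
      Complex.abs.sub_le _ _ _
    have h2 : Complex.abs (w' - w) ≤ Complex.abs (w' - c u₀) + Complex.abs (c u₀ - w) :=
      Complex.abs.sub_le _ _ _
    have h3 : Complex.abs (c u₀ - w) = Complex.abs (w - c u₀) := by
      rw [← Complex.abs.map_neg]; ring_nf
    have h4 := hεle x hx
    rw [h3] at h2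
    linarith
  have hprop : ∀ u u', u ∈ Icc (0:ℝ) 1 → u' ∈ Icc (0:ℝ) 1 → |u - u₀| < δ → |u' - u₀| < δ →
      Wind ℓ s t (c u) ν → Wind ℓ s t (c u') ν := by
    intro u u' hu hu' hud hud' h
    exact wind_step hst hℓ hloop (fun x hx => havoid u hu x hx)
      (habs3 (c u) (c u') (hδ u hu hud) (hδ u' hu' hud')) h
  -- u₀ ∈ S
  obtain ⟨u₁, hu₁S, hu₁gt⟩ : ∃ u₁ ∈ S, u₀ - δ/2 < u₁ :=
    exists_lt_of_lt_csSup ⟨0, h0S⟩ (by linarith)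
  have hu₁le : u₁ ≤ u₀ := le_csSup hbdd hu₁S
  have hu₀S : Wind ℓ s t (c u₀) ν := by
    apply hprop u₁ u₀ hu₁S.1 huIcc _ (by simp [hδpos]) hu₁S.2
    rw [abs_sub_lt_iff]
    constructor <;> linarith
  -- u₀ = 1
  have hu₀1 : u₀ = 1 := by
    by_contra hne
    have hlt : u₀ < 1 := lt_of_le_of_ne huIcc.2 hne
    set u₂ := min 1 (u₀ + δ/2) with hu₂def
    have hu₂Icc : u₂ ∈ Icc (0:ℝ) 1 := ⟨le_min (by linarith) (by linarith [huIcc.1]), min_le_left _ _⟩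
    have hu₂gt : u₀ < u₂ := lt_min hlt (by linarith)
    have hu₂close : |u₂ - u₀| < δ := by
      rw [abs_sub_lt_iff]
      have : u₂ ≤ u₀ + δ/2 := min_le_right _ _
      constructor <;> linarith
    have hu₂S : u₂ ∈ S := ⟨hu₂Icc, hprop u₀ u₂ huIcc hu₂Icc (by simp [hδpos]) hu₂close hu₀S⟩
    have := le_csSup hbdd hu₂S
    linarith
  rw [← hu₀1]
  exact hu₀S

lemma wind_far {ℓ : ℝ → ℂ} {s t : ℝ} (hst : s ≤ t) (hℓ : ContinuousOn ℓ (Icc s t))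
    (hloop : ℓ t = ℓ s) {w : ℂ}
    (hfar : ∀ x ∈ Icc s t, Complex.abs (ℓ x) < Complex.abs w) : Wind ℓ s t w 0 := by
  have hs : s ∈ Icc s t := ⟨le_rfl, hst⟩
  have habsw : 0 < Complex.abs w := lt_of_le_of_lt (Complex.abs.nonneg _) (hfar s hs)
  have hw : w ≠ 0 := Complex.abs.pos_iff.mp habsw
  have hslit : ∀ x ∈ Icc s t, 1 - ℓ x / w ∈ slitPlane := by
    intro x hx
    have h1 : ‖-(ℓ x / w)‖ < 1 := by
      rw [norm_neg, norm_div, Complex.norm_eq_abs, Complex.norm_eq_abs,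
        div_lt_one habsw]
      exact hfar x hx
    have := Complex.mem_slitPlane_of_norm_lt_one h1
    simpa [sub_eq_add_neg] using this
  refine ⟨fun x => Complex.log (-w) + Complex.log (1 - ℓ x / w), ?_, ?_, ?_⟩
  · exact continuousOn_const.add
      (ContinuousOn.clog (continuousOn_const.sub (hℓ.div_const w)) hslit)
  · intro x hx
    rw [Complex.exp_add, Complex.exp_log (neg_ne_zero.mpr hw),
      Complex.exp_log (slitPlane_ne_zero (hslit x hx))]
    field_simp
    ring
  · show Complex.log (-w) + Complex.log (1 - ℓ t / w) -
      (Complex.log (-w) + Complex.log (1 - ℓ s / w)) = (0:ℤ) * tp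
    rw [hloop]
    push_cast
    ring


lemma key {G : ℝ → ℂ} {s t : ℝ} (hst : s ≤ t) (hG : ContinuousOn G (Icc s t))
    {M : ℤ} (hM : M ≠ 0) (hdiff : G t - G s = M * tp) {ζ : ℂ} (hζ : Complex.abs ζ = 1)
    (hdisj : ∀ x ∈ Icc s t, ∀ y ∈ Icc s t, ζ * Complex.exp (G x) ≠ Complex.exp (G y)) :
    False := by
  set ℓ : ℝ → ℂ := fun x => Complex.exp (G x) with hℓdef
  have hℓc : ContinuousOn ℓ (Icc s t) := Complex.continuous_exp.comp_continuousOn hG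
  have hs : s ∈ Icc s t := ⟨le_rfl, hst⟩
  have ht : t ∈ Icc s t := ⟨hst, le_rfl⟩
  have hloop : ℓ t = ℓ s := by
    rw [hℓdef]
    simp only
    have : G t = G s + M * tp := by linear_combination hdiff
    rw [this, Complex.exp_add, exp_int_tp, mul_one]
  have hℓne : ∀ x ∈ Icc s t, ℓ x ≠ 0 := fun x _ => Complex.exp_ne_zero _
  have habsζℓ : ∀ x, Complex.abs (ζ * ℓ x) = Complex.abs (ℓ x) := by
    intro x
    rw [map_mul, hζ, one_mul]
  -- min and max of |ℓ|
  obtain ⟨x₁, hx₁, hmin⟩ := isCompact_Icc.exists_isMinOn (Set.nonempty_Icc.mpr hst)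
    ((Complex.continuous_abs.comp_continuousOn hℓc) :
      ContinuousOn (fun x => Complex.abs (ℓ x)) (Icc s t))
  obtain ⟨x₂, hx₂, hmax⟩ := isCompact_Icc.exists_isMaxOn (Set.nonempty_Icc.mpr hst)
    ((Complex.continuous_abs.comp_continuousOn hℓc) :
      ContinuousOn (fun x => Complex.abs (ℓ x)) (Icc s t))
  have hminle : ∀ x ∈ Icc s t, Complex.abs (ℓ x₁) ≤ Complex.abs (ℓ x) :=
    fun x hx => isMinOn_iff.mp hmin x hx
  have hmaxle : ∀ x ∈ Icc s t, Complex.abs (ℓ x) ≤ Complex.abs (ℓ x₂) :=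
    fun x hx => isMaxOn_iff.mp hmax x hx
  have hmpos : 0 < Complex.abs (ℓ x₁) := Complex.abs.pos (hℓne x₁ hx₁)
  have hMpos : 0 < Complex.abs (ℓ x₂) := Complex.abs.pos (hℓne x₂ hx₂)
  -- step 0 : Wind ℓ s t 0 M
  have h0 : Wind ℓ s t 0 M := ⟨G, hG, fun x _ => by simp [hℓdef], by rw [hdiff]⟩
  -- path 1 : from 0 to ζ * ℓ x₁
  have hW1 : Wind ℓ s t (ζ * ℓ x₁) M := by
    have := wind_path (c := fun u => (u : ℂ) * (ζ * ℓ x₁)) hst hℓc hloop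
      (Continuous.continuousOn (by continuity)) ?_ (ν := M) ?_
    · simpa using this
    · intro u hu x hx heq
      rcases eq_or_lt_of_le hu.2 with h1 | h1
      · subst h1
        exact hdisj x₁ hx₁ x hx (by simpa using heq.symm)
      · have : Complex.abs (ℓ x) = u * Complex.abs (ℓ x₁) := by
          rw [heq, map_mul, map_mul, hζ]
          simp [Complex.abs_ofReal, _root_.abs_of_nonneg hu.1]
        have hcon : Complex.abs (ℓ x) < Complex.abs (ℓ x₁) := by
          rw [this]
          nlinarith [hmpos, hu.1]
        exact absurd (hminle x hx) (not_le.mpr hcon)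
    · simpa using h0
  -- path 2 : from ζ * ℓ x₁ to ζ * ℓ x₂
  have hW2 : Wind ℓ s t (ζ * ℓ x₂) M := by
    have hmem : ∀ u ∈ Icc (0:ℝ) 1, x₁ + u * (x₂ - x₁) ∈ Icc s t := by
      intro u hu
      rcases le_total x₁ x₂ with h | h
      · constructor
        · nlinarith [hx₁.1, hu.1]
        · nlinarith [hx₂.2, hu.2, hu.1]
      · constructor
        · nlinarith [hx₂.1, hu.2, hu.1]
        · nlinarith [hx₁.2, hu.1]
    have := wind_path (c := fun u => ζ * ℓ (x₁ + u * (x₂ - x₁))) hst hℓc hloop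
      ?_ ?_ (ν := M) ?_
    · simpa using this
    · apply continuousOn_const.mul
      rw [hℓdef]
      apply Complex.continuous_exp.comp_continuousOn
      apply hG.comp (Continuous.continuousOn (by continuity)) hmem
    · intro u hu x hx
      exact fun heq => hdisj (x₁ + u * (x₂ - x₁)) (hmem u hu) x hx heq.symm
    · simpa using hW1
  -- path 3 : from ζ * ℓ x₂ to 2 * (ζ * ℓ x₂)
  have hW3 : Wind ℓ s t ((2:ℂ) * (ζ * ℓ x₂)) M := by
    have := wind_path (c := fun u => (1 + (u:ℂ)) * (ζ * ℓ x₂)) hst hℓc hloop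
      (Continuous.continuousOn (by continuity)) ?_ (ν := M) ?_
    · have h2 : ((1:ℂ) + 1) = 2 := by norm_num
      simpa [h2] using this
    · intro u hu x hx heq
      rcases eq_or_lt_of_le hu.1 with h1 | h1
      · rw [← h1] at heq
        simp at heq
        exact hdisj x₂ hx₂ x hx (by simpa using heq.symm)
      · have habs : Complex.abs (ℓ x) = (1+u) * Complex.abs (ℓ x₂) := by
          rw [heq]
          have h2 : ((1:ℂ) + u) = ((1 + u : ℝ) : ℂ) := by push_cast; ring
          rw [h2, map_mul, map_mul, hζ, one_mul, Complex.abs_ofReal,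
            _root_.abs_of_nonneg (by linarith : (0:ℝ) ≤ 1 + u)]
        have hcon : Complex.abs (ℓ x₂) < Complex.abs (ℓ x) := by
          rw [habs]
          nlinarith [hMpos]
        exact absurd (hmaxle x hx) (not_le.mpr hcon)
    · simpa using hW2
  -- far point has winding 0
  have hW0 : Wind ℓ s t ((2:ℂ) * (ζ * ℓ x₂)) 0 := by
    apply wind_far hst hℓc hloop
    intro x hx
    have : Complex.abs ((2:ℂ) * (ζ * ℓ x₂)) = 2 * Complex.abs (ℓ x₂) := by
      rw [map_mul, habsζℓ]
      norm_num
    rw [this]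
    have := hmaxle x hx
    linarith
  exact hM (wind_unique hst hW3 hW0)


lemma abs_int_tp_ge {v : ℤ} (hv : v ≠ 0) : 1 ≤ Complex.abs ((v:ℂ) * tp) := by
  rw [map_mul, abs_tp]
  have h1 : (1:ℝ) ≤ |(v:ℝ)| := by
    have := Int.one_le_abs hv
    calc (1:ℝ) ≤ (|v| : ℤ) := by exact_mod_cast this
      _ = |(v:ℝ)| := by push_cast; ring
  have h2 : Complex.abs ((v:ℂ)) = |(v:ℝ)| := by
    rw [← Complex.ofReal_intCast, Complex.abs_ofReal]
  rw [h2]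
  nlinarith [Real.pi_gt_three]

lemma chord {g : ℝ → ℂ} (hg : ContinuousOn g (Icc 0 1)) {n : ℤ} (hn : n ≠ 0)
    (hdiff : g 1 - g 0 = n * tp) :
    ∃ a b : ℝ, a ∈ Icc (0:ℝ) 1 ∧ b ∈ Icc (0:ℝ) 1 ∧ a < b ∧
      (g b - g a = tp ∨ g b - g a = -tp) := by
  by_contra hcon
  push_neg at hcon
  have hno : ∀ a b : ℝ, a ∈ Icc (0:ℝ) 1 → b ∈ Icc (0:ℝ) 1 → a ≤ b →
      ∀ v : ℤ, g b - g a = v * tp → v ≠ 1 ∧ v ≠ -1 := by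
    intro a b ha hb hab v hv
    have hlt : ∀ w : ℂ, w ≠ 0 → g b - g a = w → a < b := by
      intro w hw hgw
      rcases eq_or_lt_of_le hab with h | h
      · exfalso; apply hw; rw [← hgw, h, sub_self]
      · exact h
    constructor <;> rintro rfl
    · have hv' : g b - g a = tp := by simpa using hv
      exact (hcon a b ha hb (hlt tp tp_ne hv')).1 hv'
    · have hv' : g b - g a = -tp := by rw [hv]; push_cast; ring
      exact (hcon a b ha hb (hlt (-tp) (by simpa using tp_ne) hv')).2 hv'
  set D : Set (ℝ × ℝ) := Icc (0:ℝ) 1 ×ˢ Icc (0:ℝ) 1 with hD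
  set φ : ℝ × ℝ → ℂ := fun q => g q.2 - g q.1 with hφdef
  have hφ : ContinuousOn φ D := by
    apply ContinuousOn.sub
    · exact hg.comp continuous_snd.continuousOn (fun q hq => hq.2)
    · exact hg.comp continuous_fst.continuousOn (fun q hq => hq.1)
  set C : Set ℂ := {z | Complex.exp z = 1 ∧ 1 ≤ Complex.abs z} with hC
  have hCclosed : IsClosed C :=
    (isClosed_eq Complex.continuous_exp continuous_const).inter
      (isClosed_le continuous_const Complex.continuous_abs)
  set T : Set (ℝ × ℝ) := (D ∩ φ ⁻¹' C) ∩ {q : ℝ × ℝ | q.1 ≤ q.2} with hT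
  have hTclosed : IsClosed T :=
    (hφ.preimage_isClosed_of_isClosed (isClosed_Icc.prod isClosed_Icc) hCclosed).inter
      (isClosed_le continuous_fst continuous_snd)
  have hTcompact : IsCompact T :=
    ((isCompact_Icc.prod isCompact_Icc).of_isClosed_subset hTclosed
      (fun q hq => hq.1.1))
  have hTne : ((0:ℝ), (1:ℝ)) ∈ T := by
    refine ⟨⟨⟨⟨le_rfl, zero_le_one⟩, ⟨zero_le_one, le_rfl⟩⟩, ?_, ?_⟩,
      (by norm_num : ((0:ℝ),(1:ℝ)) ∈ {q : ℝ × ℝ | q.1 ≤ q.2})⟩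
    · show Complex.exp (g 1 - g 0) = 1
      rw [hdiff]
      exact exp_int_tp n
    · show 1 ≤ Complex.abs (g 1 - g 0)
      rw [hdiff]
      exact abs_int_tp_ge hn
  obtain ⟨q, hqT, hqmin⟩ := hTcompact.exists_isMinOn ⟨_, hTne⟩
    ((continuous_snd.sub continuous_fst).continuousOn :
      ContinuousOn (fun q : ℝ × ℝ => q.2 - q.1) T)
  obtain ⟨⟨⟨hq1, hq2⟩, hqC⟩, hqle'⟩ := hqT
  have hqle : q.1 ≤ q.2 := hqle'
  have hqexp : Complex.exp (g q.2 - g q.1) = 1 := hqC.1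
  have hqabs : 1 ≤ Complex.abs (g q.2 - g q.1) := hqC.2
  obtain ⟨k, hk⟩ := Complex.exp_eq_one_iff.mp hqexp
  rw [show ((2:ℂ) * Real.pi * Complex.I) = tp from rfl] at hk
  have hkne : k ≠ 0 := by
    intro h
    rw [h] at hk
    simp at hk
    rw [hk] at hqabs
    simp at hqabs
    linarith
  have hknotpm := hno q.1 q.2 hq1 hq2 hqle k hk
  set K : ℤ := |k| with hK
  have hK2 : 2 ≤ K := by
    rcases hknotpm with ⟨h1, h2⟩
    rw [hK]
    rcases le_or_gt 0 k with h | h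
    · rw [_root_.abs_of_nonneg h]; omega
    · rw [_root_.abs_of_neg h]; omega
  set M : ℤ := if 0 < k then 1 else -1 with hM
  have hkMK : k = M * K := by
    rw [hM, hK]
    rcases lt_trichotomy k 0 with h | h | h
    · rw [if_neg (not_lt.mpr h.le), _root_.abs_of_neg h]; ring
    · exact absurd h hkne
    · rw [if_pos h, _root_.abs_of_pos h]; ring
  have hMne : M ≠ 0 := by
    rw [hM]; split <;> simp
  set κ : ℂ := ((K:ℤ):ℂ) with hκ
  have hKne : κ ≠ 0 := by
    rw [hκ]
    exact_mod_cast (by omega : (K:ℤ) ≠ 0)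
  set G : ℝ → ℂ := fun x => g x / κ with hGdef
  have hsub : Icc q.1 q.2 ⊆ Icc (0:ℝ) 1 := Icc_subset_Icc hq1.1 hq2.2
  have hGc : ContinuousOn G (Icc q.1 q.2) := (hg.mono hsub).div_const κ
  have hGdiff : G q.2 - G q.1 = M * tp := by
    show g q.2 / κ - g q.1 / κ = M * tp
    rw [div_sub_div_same, hk, hkMK]
    have h5 : ((M * K : ℤ):ℂ) * tp = κ * ((M:ℂ) * tp) := by
      rw [hκ]; push_cast; ring
    rw [h5, mul_div_cancel_left₀ _ hKne]
  set ζ : ℂ := Complex.exp (tp / κ) with hζdef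
  have hζabs : Complex.abs ζ = 1 := by
    rw [hζdef, Complex.abs_exp]
    have h6 : (tp / κ).re = 0 := by
      have h7 : tp / κ = ((2 * Real.pi / (K:ℤ) : ℝ) : ℂ) * Complex.I := by
        rw [tp_def, hκ]
        push_cast
        have hKR : ((K:ℤ):ℂ) ≠ 0 := by rw [← hκ]; exact hKne
        field_simp
      rw [h7]
      simp
    rw [h6, Real.exp_zero]
  have hdisj : ∀ x ∈ Icc q.1 q.2, ∀ y ∈ Icc q.1 q.2,
      ζ * Complex.exp (G x) ≠ Complex.exp (G y) := by
    intro x hx y hy heq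
    rw [hζdef, ← Complex.exp_add] at heq
    obtain ⟨j, hj⟩ := Complex.exp_eq_exp_iff_exists_int.mp heq
    rw [show ((2:ℂ) * Real.pi * Complex.I) = tp from rfl] at hj
    have hgx : G x * κ = g x := by
      simp only [hGdef]; exact div_mul_cancel₀ _ hKne
    have hgy : G y * κ = g y := by
      simp only [hGdef]; exact div_mul_cancel₀ _ hKne
    have hκtp : tp / κ * κ = tp := div_mul_cancel₀ _ hKne
    have h3 := congrArg (fun z => z * κ) hj
    simp only [add_mul] at h3
    rw [hκtp, hgx, hgy] at h3
    -- h3 : tp + g x = g y + ↑j * tp * κ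
    have hgxy : g x - g y = ((j * K - 1 : ℤ) : ℂ) * tp := by
      push_cast
      rw [hκ] at h3
      push_cast at h3
      linear_combination h3
    set v : ℤ := j * K - 1 with hv
    have hvne : v ≠ 0 := by
      intro h
      have hdvd : (K:ℤ) ∣ 1 := ⟨j, by linear_combination hv - h⟩
      have := Int.le_of_dvd one_pos hdvd
      omega
    rcases le_total x y with hxy | hxy
    · have hval : g y - g x = ((-v : ℤ):ℂ) * tp := by
        push_cast
        push_cast at hgxy
        linear_combination -hgxy
      have hvne2 : -v ≠ 0 := by omega
      have hmemT : (x, y) ∈ T := by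
        refine ⟨⟨⟨hsub hx, hsub hy⟩, ?_, ?_⟩, hxy⟩
        · show Complex.exp (g y - g x) = 1
          rw [hval]; exact exp_int_tp _
        · show 1 ≤ Complex.abs (g y - g x)
          rw [hval]; exact abs_int_tp_ge hvne2
      have hmin2 : q.2 - q.1 ≤ y - x := hqmin hmemT
      have hxeq : x = q.1 ∧ y = q.2 := by
        have h8 := hx.1
        have h9 := hy.2
        constructor <;> linarith
      have h10 : ((-v:ℤ):ℂ) * tp = (k:ℂ) * tp := by
        rw [← hval, ← hk, hxeq.1, hxeq.2]
      have hveq : (-v : ℤ) = k := by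
        have := mul_right_cancel₀ tp_ne h10
        exact_mod_cast this
      rw [hkMK] at hveq
      have hdvd : (K:ℤ) ∣ 1 := ⟨M + j, by linear_combination hveq + hv⟩
      have := Int.le_of_dvd one_pos hdvd
      omega
    · have hnv := hno y x (hsub hy) (hsub hx) hxy v hgxy
      have hmemT : (y, x) ∈ T := by
        refine ⟨⟨⟨hsub hy, hsub hx⟩, ?_, ?_⟩, hxy⟩
        · show Complex.exp (g x - g y) = 1
          rw [hgxy]; exact exp_int_tp _
        · show 1 ≤ Complex.abs (g x - g y)
          rw [hgxy]; exact abs_int_tp_ge hvne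
      have hmin2 : q.2 - q.1 ≤ x - y := hqmin hmemT
      have hxeq : y = q.1 ∧ x = q.2 := by
        have h8 := hy.1
        have h9 := hx.2
        constructor <;> linarith
      have h10 : ((v:ℤ):ℂ) * tp = (k:ℂ) * tp := by
        rw [← hgxy, ← hk, hxeq.1, hxeq.2]
      have hveq : (v : ℤ) = k := by
        have := mul_right_cancel₀ tp_ne h10
        exact_mod_cast this
      rw [hkMK] at hveq
      have hdvd : (K:ℤ) ∣ 1 := ⟨j - M, by linear_combination hv - hveq⟩
      have := Int.le_of_dvd one_pos hdvd
      omega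
  exact key hqle hGc hMne hGdiff hζabs hdisj

end Stmt5Aux

namespace Stmt5Aux

lemma decomp_reverse {h : ℂ → ℂ} {γ : ℝ → ℂ} {l : ℕ} (hd : Decomp h γ l) :
    Decomp h (fun u => γ (1 - u)) l := by
  obtain ⟨t, ht0, htl, hmono, hfree⟩ := hd
  refine ⟨fun i => 1 - t (l - i), ?_, ?_, ?_, ?_⟩
  · simp [htl]
  · simp [ht0]
  · intro i hi
    have he : l - i = (l - (i+1)) + 1 := by omega
    show (1:ℝ) - t (l - i) ≤ 1 - t (l - (i + 1))
    rw [he]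
    have := hmono (l - (i+1)) (by omega)
    linarith
  · intro i hi s hs s' hs'
    have he : l - i = (l - (i+1)) + 1 := by omega
    set j := l - (i + 1) with hj
    have hjl : j < l := by omega
    simp only [mem_Icc] at hs hs'
    rw [he] at hs hs'
    show h (γ (1 - s)) ≠ γ (1 - s')
    apply hfree j hjl (1 - s) ⟨by linarith [hs.2], by linarith [hs.1]⟩
      (1 - s') ⟨by linarith [hs'.2], by linarith [hs'.1]⟩

lemma subloop (h : ℂ → ℂ) (d : ℕ)
    (hmod : ∀ γ : ℝ → ℂ, IsLoopIn γ → HasDeg γ 1 → ∀ l : ℕ, Decomp h γ l → d ≤ l)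
    (γ : ℝ → ℂ) (hγc : ContinuousOn γ (Icc 0 1)) (hγne : ∀ u ∈ Icc (0:ℝ) 1, γ u ≠ 0)
    (g : ℝ → ℂ) (hgc : ContinuousOn g (Icc 0 1))
    (hγg : ∀ u ∈ Icc (0:ℝ) 1, γ u = Complex.exp (g u))
    (hfree : Decomp h γ 3)
    (hne : ∀ w ∈ Icc (0:ℝ) 1, h (γ w) ≠ γ w)
    (a b : ℝ) (ha : a ∈ Icc (0:ℝ) 1) (hb : b ∈ Icc (0:ℝ) 1) (hab : a < b)
    (hchord : g b - g a = tp) : d ≤ 3 := by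
  have hba : 0 < b - a := by linarith
  set φ : ℝ → ℝ := fun u => a + u * (b - a) with hφdef
  have hφ0 : φ 0 = a := by simp [hφdef]
  have hφ1 : φ 1 = b := by simp [hφdef]
  have hφc : Continuous φ := by continuity
  have hφmono : ∀ u u' : ℝ, u ≤ u' → φ u ≤ φ u' := by
    intro u u' huu
    simp only [hφdef]
    nlinarith
  have hφab : ∀ u ∈ Icc (0:ℝ) 1, φ u ∈ Icc a b := by
    intro u hu
    constructor
    · simp only [hφdef]; nlinarith [hu.1]
    · simp only [hφdef]; nlinarith [hu.2]
  have habsub : Icc a b ⊆ Icc (0:ℝ) 1 := Icc_subset_Icc ha.1 hb.2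
  have hφ01 : ∀ u ∈ Icc (0:ℝ) 1, φ u ∈ Icc (0:ℝ) 1 := fun u hu => habsub (hφab u hu)
  set δ : ℝ → ℂ := fun u => γ (φ u) with hδdef
  have hδc : ContinuousOn δ (Icc 0 1) := hγc.comp hφc.continuousOn hφ01
  have hexp_tp : Complex.exp tp = 1 := by
    have := exp_int_tp 1
    simpa using this
  have hδloop : δ 0 = δ 1 := by
    show γ (φ 0) = γ (φ 1)
    rw [hφ0, hφ1, hγg a ha, hγg b hb]
    have hgb : g b = g a + tp := by linear_combination hchord
    rw [hgb, Complex.exp_add, hexp_tp, mul_one]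
  have hδne : ∀ u ∈ Icc (0:ℝ) 1, δ u ≠ 0 := fun u hu => hγne (φ u) (hφ01 u hu)
  have hδdeg : HasDeg δ 1 := by
    refine ⟨fun u => g (φ u), hgc.comp hφc.continuousOn hφ01, ?_, ?_⟩
    · intro u hu
      exact hγg (φ u) (hφ01 u hu)
    · show g (φ 1) - g (φ 0) = _
      rw [hφ1, hφ0, hchord, tp_def]
      push_cast
      ring
  -- decomposition of the subloop
  obtain ⟨t, ht0, ht3, hmono, hfr⟩ := hfree
  set cl : ℝ → ℝ := fun v => max a (min b v) with hcl
  have hclmono : ∀ v v', v ≤ v' → cl v ≤ cl v' := by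
    intro v v' hvv
    exact max_le_max le_rfl (min_le_min le_rfl hvv)
  have hclmem : ∀ v, cl v ∈ Icc a b := by
    intro v
    constructor
    · exact le_max_left _ _
    · exact max_le (le_of_lt hab) (min_le_left _ _)
  set u' : ℕ → ℝ := fun i => (cl (t i) - a) / (b - a) with hu'
  have hφu' : ∀ i, φ (u' i) = cl (t i) := by
    intro i
    simp only [hφdef, hu']
    rw [div_mul_cancel₀ _ hba.ne']
    ring
  have hdec : Decomp h δ 3 := by
    refine ⟨u', ?_, ?_, ?_, ?_⟩
    · simp only [hu', ht0, hcl]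
      rw [min_eq_right hb.1, max_eq_left ha.1]
      simp
    · simp only [hu', ht3, hcl]
      rw [min_eq_left hb.2, max_eq_right (le_of_lt hab)]
      field_simp
    · intro i hi
      show (cl (t i) - a) / (b - a) ≤ (cl (t (i+1)) - a) / (b - a)
      have h9 := hclmono (t i) (t (i+1)) (hmono i hi)
      rw [div_eq_mul_inv, div_eq_mul_inv]
      apply mul_le_mul_of_nonneg_right (by linarith) (by positivity)
    · intro i hi s hs s' hs'
      have hsb : φ (u' i) ≤ φ s ∧ φ s ≤ φ (u' (i+1)) :=
        ⟨hφmono _ _ hs.1, hφmono _ _ hs.2⟩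
      have hsb' : φ (u' i) ≤ φ s' ∧ φ s' ≤ φ (u' (i+1)) :=
        ⟨hφmono _ _ hs'.1, hφmono _ _ hs'.2⟩
      rw [hφu' i, hφu' (i+1)] at hsb hsb'
      show h (γ (φ s)) ≠ γ (φ s')
      rcases eq_or_lt_of_le (hclmono (t i) (t (i+1)) (hmono i hi)) with hcc | hcc
      · -- degenerate piece
        have hw1 : φ s = cl (t i) := le_antisymm (hcc ▸ hsb.2) hsb.1
        have hw2 : φ s' = cl (t i) := le_antisymm (hcc ▸ hsb'.2) hsb'.1
        rw [hw1, hw2]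
        exact hne (cl (t i)) (habsub (hclmem (t i)))
      · -- the piece sits inside [t i, t (i+1)]
        have hcl1 : t i ≤ cl (t i) := by
          rcases le_total (t i) b with hh | hh
          · simp only [hcl]
            rw [min_eq_right hh]
            exact le_max_right _ _
          · exfalso
            have e1 : cl (t i) = b := by
              simp only [hcl]
              rw [min_eq_left hh, max_eq_right (le_of_lt hab)]
            have e2 : cl (t (i+1)) = b := by
              simp only [hcl]
              rw [min_eq_left (le_trans hh (hmono i hi)), max_eq_right (le_of_lt hab)]
            rw [e1, e2] at hcc
            exact lt_irrefl _ hcc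
        have hcl2 : cl (t (i+1)) ≤ t (i+1) := by
          rcases le_total a (t (i+1)) with hh | hh
          · simp only [hcl]
            exact max_le hh (min_le_right _ _)
          · exfalso
            have e1 : cl (t (i+1)) = a := by
              simp only [hcl]
              rw [min_eq_right (le_trans hh (le_of_lt hab)), max_eq_left hh]
            have e2 : cl (t i) = a := by
              simp only [hcl]
              rw [min_eq_right (le_trans (le_trans (hmono i hi) hh) (le_of_lt hab)),
                max_eq_left (le_trans (hmono i hi) hh)]
            rw [e1, e2] at hcc
            exact lt_irrefl _ hcc
        apply hfr i hi (φ s) ⟨le_trans hcl1 hsb.1, le_trans hsb.2 hcl2⟩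
          (φ s') ⟨le_trans hcl1 hsb'.1, le_trans hsb'.2 hcl2⟩
  exact hmod δ ⟨hδc, hδloop, hδne⟩ hδdeg 3 hdec

end Stmt5Aux

/-- Let `h` be an orientation-preserving homeomorphism of the plane with unique fixed
point `0`, whose module is `d ≥ 2` (every closed curve of degree `1` around `0` has
`h`-length at least `d`). If some closed curve of nonzero degree around `0` can be
written as a concatenation of at most three `h`-free arcs, then `d ≤ 3`. -/
theorem stmt5 (h : ℂ ≃ₜ ℂ) (hor : IsotopicToId ⇑h)
    (hfix : ∀ x : ℂ, h x = x ↔ x = 0)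
    (d : ℕ) (hd : 2 ≤ d)
    (hmod : ∀ γ : ℝ → ℂ, IsLoopIn γ → HasDeg γ 1 → ∀ l : ℕ, Decomp (⇑h) γ l → d ≤ l)
    (γ : ℝ → ℂ) (n : ℤ) (hγ : IsLoopIn γ) (hdeg : HasDeg γ n) (hn : n ≠ 0)
    (hfree : Decomp (⇑h) γ 3) :
    d ≤ 3 := by
  obtain ⟨g, hgc, hγg, hgdiff⟩ := hdeg
  obtain ⟨hγc, hγ01, hγne⟩ := hγ
  have hne : ∀ w ∈ Icc (0:ℝ) 1, (⇑h) (γ w) ≠ γ w := by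
    intro w hw hc
    exact hγne w hw ((hfix (γ w)).mp hc)
  have hdiff' : g 1 - g 0 = n * Stmt5Aux.tp := by
    rw [hgdiff, Stmt5Aux.tp_def]
    push_cast
    ring
  obtain ⟨a, b, ha, hb, hab, hch⟩ := Stmt5Aux.chord hgc hn hdiff'
  rcases hch with hch | hch
  · exact Stmt5Aux.subloop (⇑h) d hmod γ hγc hγne g hgc hγg hfree hne a b ha hb hab hch
  · have hmaps : ∀ u ∈ Icc (0:ℝ) 1, 1 - u ∈ Icc (0:ℝ) 1 := by
      intro u hu
      exact ⟨by linarith [hu.2], by linarith [hu.1]⟩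
    have hrc : Continuous (fun u : ℝ => 1 - u) := by continuity
    refine Stmt5Aux.subloop (⇑h) d hmod (fun u => γ (1 - u))
      (hγc.comp hrc.continuousOn hmaps)
      (fun u hu => hγne (1 - u) (hmaps u hu))
      (fun u => g (1 - u)) (hgc.comp hrc.continuousOn hmaps)
      (fun u hu => hγg (1 - u) (hmaps u hu))
      (Stmt5Aux.decomp_reverse hfree)
      (fun w hw => hne (1 - w) (hmaps w hw))
      (1 - b) (1 - a) (hmaps b hb) (hmaps a ha) (by linarith) ?_
    show g (1 - (1 - a)) - g (1 - (1 - b)) = Stmt5Aux.tp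
    have e1 : 1 - (1 - a) = a := by ring
    have e2 : 1 - (1 - b) = b := by ring
    rw [e1, e2]
    linear_combination -hch
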